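/- Let n ≥ 1 and let y : Fin n → ℝ be a monotone (nondecreasing) tuple. Define f : EuclideanSpace ℝ (Fin n) → ℝ by f(θ) = min over permutations σ of Fin n of ∑ i, (θ i − y (σ i))². If θ is strictly increasing (θ i < θ j whenever i < j), then f is Fréchet-differentiable at θ with derivative the linear map v ↦ ∑ i, 2 (θ i − y i) · v i; that is, the gradient of the squared matching distance at θ has i-th coordinate 2(θ i − y i). -/

import Mathlib

lemma matching_min (n : ℕ) (y : Fin n → ℝ) (hy : Monotone y) (x : Fin n → ℝ)
    (hx : ∀ i j : Fin n, i < j → x i < x j) (σ : Equiv.Perm (Fin n)) :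
    ∑ i, (x i - y i) ^ 2 ≤ ∑ i, (x i - y (σ i)) ^ 2 := by
  have hmono : Monovary x y := by
    intro i j hij
    rcases lt_or_ge i j with h | h
    · exact (hx i j h).le
    · exact absurd (hy h) (not_le.2 hij)
  have key : ∑ i, x i * y (σ i) ≤ ∑ i, x i * y i :=
    hmono.sum_mul_comp_perm_le_sum_mul
  have hsq : ∑ i, y (σ i) ^ 2 = ∑ i, y i ^ 2 :=
    Equiv.sum_comp σ (fun i => y i ^ 2)
  have expand : ∀ (z : Fin n → ℝ), ∑ i, (x i - z i) ^ 2
      = ∑ i, x i ^ 2 - 2 * ∑ i, x i * z i + ∑ i, z i ^ 2 := by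
    intro z
    rw [Finset.mul_sum, ← Finset.sum_sub_distrib, ← Finset.sum_add_distrib]
    apply Finset.sum_congr rfl
    intro i _; ring
  have e1 := expand (fun i => y (σ i))
  have e2 := expand y
  rw [e1, e2, hsq]
  linarith

/-- Gradient of the squared matching distance: for a monotone tuple `y : Fin n → ℝ`, the
function `f θ = min over permutations σ of ∑ i, (θ i - y (σ i))²` is Fréchet-differentiable
at every strictly increasing `θ`, with derivative `v ↦ ∑ i, 2 (θ i - y i) * v i`. -/
theorem matching_distance_gradient (n : ℕ) (hn : 1 ≤ n) (y : Fin n → ℝ)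
    (hy : Monotone y) (θ : EuclideanSpace ℝ (Fin n))
    (hθ : ∀ i j : Fin n, i < j → θ i < θ j) :
    HasFDerivAt
      (fun x : EuclideanSpace ℝ (Fin n) =>
        ⨅ σ : Equiv.Perm (Fin n), ∑ i, (x i - y (σ i)) ^ 2)
      (∑ i, (2 * (θ i - y i)) •
        (EuclideanSpace.proj i : EuclideanSpace ℝ (Fin n) →L[ℝ] ℝ)) θ := by
  -- the smooth candidate
  have hg : HasFDerivAt
      (fun x : EuclideanSpace ℝ (Fin n) => ∑ i, (x i - y i) ^ 2)
      (∑ i, (2 * (θ i - y i)) •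
        (EuclideanSpace.proj i : EuclideanSpace ℝ (Fin n) →L[ℝ] ℝ)) θ := by
    apply HasFDerivAt.fun_sum
    intro i _
    have h1 : HasFDerivAt (fun x : EuclideanSpace ℝ (Fin n) => x i - y i)
        (EuclideanSpace.proj i : EuclideanSpace ℝ (Fin n) →L[ℝ] ℝ) θ := by
      simpa using (EuclideanSpace.proj (𝕜 := ℝ) i).hasFDerivAt.sub_const (y i)
    simp only [pow_two]
    have h2 : (2 * (θ i - y i)) • (EuclideanSpace.proj i : EuclideanSpace ℝ (Fin n) →L[ℝ] ℝ)
        = (θ i - y i) • (EuclideanSpace.proj i : EuclideanSpace ℝ (Fin n) →L[ℝ] ℝ)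
          + (θ i - y i) • (EuclideanSpace.proj i : EuclideanSpace ℝ (Fin n) →L[ℝ] ℝ) := by
      rw [two_mul, add_smul]
    rw [h2]
    exact h1.mul h1
  -- local equality
  have heq : ∀ x : EuclideanSpace ℝ (Fin n), (∀ i j : Fin n, i < j → x i < x j) →
      (⨅ σ : Equiv.Perm (Fin n), ∑ i, (x i - y (σ i)) ^ 2) = ∑ i, (x i - y i) ^ 2 := by
    intro x hx
    apply le_antisymm
    · exact ciInf_le (Set.Finite.bddBelow (Set.finite_range _)) (1 : Equiv.Perm (Fin n))
    · exact le_ciInf fun σ => matching_min n y hy x hx σ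
  have hopen : IsOpen {x : EuclideanSpace ℝ (Fin n) | ∀ i j : Fin n, i < j → x i < x j} := by
    have : {x : EuclideanSpace ℝ (Fin n) | ∀ i j : Fin n, i < j → x i < x j}
        = ⋂ p : Fin n × Fin n, {x | p.1 < p.2 → x p.1 < x p.2} := by
      ext x; simp [Set.mem_iInter]
    rw [this]
    apply isOpen_iInter_of_finite
    intro p
    by_cases h : p.1 < p.2
    · simp only [h, forall_true_left]
      exact isOpen_lt (EuclideanSpace.proj p.1).continuous (EuclideanSpace.proj p.2).continuous
    · simp [h]
  have hmem : {x : EuclideanSpace ℝ (Fin n) | ∀ i j : Fin n, i < j → x i < x j} ∈ nhds θ :=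
    hopen.mem_nhds hθ
  apply hg.congr_of_eventuallyEq
  filter_upwards [hmem] with x hx
  exact heq x hx
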